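/- Let a₁ ∈ ℝ with a₁ ≠ 0, T > 0, and ω₁, φ₁ ∈ ℝ with sin(ω₁T) ≠ 0; set θ_n = ω₁Tn + φ₁, z₁(n) = sin θ_{n+1} − sin θ_n, z₂(n) = a₁T((n+1)cos θ_{n+1} − n cos θ_n), z₃(n) = a₁(cos θ_{n+1} − cos θ_n), and let R_N be the 3×3 real matrix with entries [R_N]_{i,j} = Σ_{n=1}^{N−1} z_i(n)·z_j(n). Then lim_{N→∞} det(R_N)/N⁵ = a₁⁴·T²·(1 − cos(ω₁T))³/12. -/

import Mathlib

open Filter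

/-- The three sensitivity sequences `z₁, z₂, z₃` (partial derivatives of the
first-order difference of the sampled sinusoid w.r.t. amplitude, frequency, phase). -/
noncomputable def zSeq (a₁ T ω₁ φ₁ : ℝ) : Fin 3 → ℕ → ℝ :=
  ![fun n => Real.sin (ω₁ * T * (n + 1) + φ₁) - Real.sin (ω₁ * T * n + φ₁),
    fun n => a₁ * T * ((n + 1) * Real.cos (ω₁ * T * (n + 1) + φ₁)
      - n * Real.cos (ω₁ * T * n + φ₁)),
    fun n => a₁ * (Real.cos (ω₁ * T * (n + 1) + φ₁) - Real.cos (ω₁ * T * n + φ₁))]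

/-- The Gram (Fisher-information-type) matrix `R_N` with entries
`[R_N]_{i,j} = Σ_{n=1}^{N−1} z_i(n) z_j(n)`. -/
noncomputable def Rmat (a₁ T ω₁ φ₁ : ℝ) (N : ℕ) : Matrix (Fin 3) (Fin 3) ℝ :=
  Matrix.of fun i j => ∑ n ∈ Finset.Icc 1 (N - 1),
    zSeq a₁ T ω₁ φ₁ i n * zSeq a₁ T ω₁ φ₁ j n

namespace DetRmatAux

/-- Partial sums of a sampled cosine are bounded. -/
lemma cos_psum_bound (α β : ℝ) (hα : Real.sin (α/2) ≠ 0) (M : ℕ) :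
    |∑ n ∈ Finset.range M, Real.cos (α*n+β)| ≤ 1/|Real.sin (α/2)| := by
  have key : ∀ n : ℕ, Real.cos (α*n+β)
      = (Real.sin (α*((n:ℝ)+1)+β-α/2) - Real.sin (α*n+β-α/2)) / (2*Real.sin (α/2)) := by
    intro n
    rw [Real.sin_sub_sin,
      show (α*((n:ℝ)+1)+β-α/2 - (α*n+β-α/2))/2 = α/2 by ring,
      show (α*((n:ℝ)+1)+β-α/2 + (α*n+β-α/2))/2 = α*n+β by ring,
      eq_div_iff (mul_ne_zero two_ne_zero hα)]
    ring
  have hsum : ∑ n ∈ Finset.range M, Real.cos (α*n+β)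
      = ((fun n : ℕ => Real.sin (α*n+β-α/2)) M
          - (fun n : ℕ => Real.sin (α*n+β-α/2)) 0) / (2*Real.sin (α/2)) := by
    rw [← Finset.sum_range_sub (fun n : ℕ => Real.sin (α*n+β-α/2)) M, Finset.sum_div]
    refine Finset.sum_congr rfl fun n _ => ?_
    rw [key n]
    push_cast
    ring_nf
  rw [hsum]
  have h2 : (0:ℝ) < |Real.sin (α/2)| := abs_pos.mpr hα
  rw [abs_div, abs_mul, abs_two, div_le_div_iff₀ (by positivity) h2]
  have hb : |(fun n : ℕ => Real.sin (α*n+β-α/2)) M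
      - (fun n : ℕ => Real.sin (α*n+β-α/2)) 0| ≤ 2 := by
    refine le_trans (abs_sub _ _) ?_
    have := Real.abs_sin_le_one (α*(M:ℝ)+β-α/2)
    have := Real.abs_sin_le_one (α*((0:ℕ):ℝ)+β-α/2)
    simp only at *
    linarith
  nlinarith [abs_nonneg ((fun n : ℕ => Real.sin (α*n+β-α/2)) M
      - (fun n : ℕ => Real.sin (α*n+β-α/2)) 0)]

/-- Abel-summation bound: weighting a bounded-partial-sum sequence by `n^k`
costs only a factor `2·M^k`. -/
lemma abel_bound (x : ℕ → ℝ) (C : ℝ) (hx : ∀ M : ℕ, |∑ n ∈ Finset.range M, x n| ≤ C)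
    (k M : ℕ) : |∑ n ∈ Finset.range M, (n:ℝ)^k * x n| ≤ 2*C*(M:ℝ)^k := by
  have hC : 0 ≤ C := by simpa using hx 0
  have h := Finset.sum_range_by_parts (fun i : ℕ => (i:ℝ)^k) x M
  simp only [smul_eq_mul] at h
  rw [h]
  have hM1 : ((M-1:ℕ):ℝ)^k ≤ (M:ℝ)^k :=
    pow_le_pow_left₀ (by positivity) (Nat.cast_le.mpr (Nat.sub_le M 1)) k
  have hb1 : |((M-1:ℕ):ℝ)^k * ∑ n ∈ Finset.range M, x n| ≤ (M:ℝ)^k * C := by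
    rw [abs_mul, abs_pow, Nat.abs_cast]
    exact mul_le_mul hM1 (hx M) (abs_nonneg _) (by positivity)
  have hb2 : |∑ i ∈ Finset.range (M-1),
      (((i+1:ℕ):ℝ)^k - ((i:ℕ):ℝ)^k) * ∑ j ∈ Finset.range (i+1), x j| ≤ (M:ℝ)^k * C := by
    refine le_trans (Finset.abs_sum_le_sum_abs _ _) ?_
    have step : ∀ i ∈ Finset.range (M-1),
        |(((i+1:ℕ):ℝ)^k - ((i:ℕ):ℝ)^k) * ∑ j ∈ Finset.range (i+1), x j|
          ≤ (((i+1:ℕ):ℝ)^k - ((i:ℕ):ℝ)^k) * C := by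
      intro i _
      have hd : (0:ℝ) ≤ ((i+1:ℕ):ℝ)^k - ((i:ℕ):ℝ)^k := by
        have : ((i:ℕ):ℝ) ≤ ((i+1:ℕ):ℝ) := by push_cast; linarith
        have := pow_le_pow_left₀ (by positivity : (0:ℝ) ≤ ((i:ℕ):ℝ)) this k
        linarith
      rw [abs_mul, abs_of_nonneg hd]
      exact mul_le_mul_of_nonneg_left (hx (i+1)) hd
    refine le_trans (Finset.sum_le_sum step) ?_
    rw [← Finset.sum_mul, Finset.sum_range_sub (fun i : ℕ => (i:ℝ)^k)]
    have h0 : (0:ℝ) ≤ (((0:ℕ):ℝ))^k := by positivity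
    have : (((M-1:ℕ):ℝ)^k - ((0:ℕ):ℝ)^k) ≤ (M:ℝ)^k := by linarith
    exact mul_le_mul_of_nonneg_right this hC
  calc |((M-1:ℕ):ℝ)^k * ∑ n ∈ Finset.range M, x n - ∑ i ∈ Finset.range (M-1),
      (((i+1:ℕ):ℝ)^k - ((i:ℕ):ℝ)^k) * ∑ j ∈ Finset.range (i+1), x j|
      ≤ |((M-1:ℕ):ℝ)^k * ∑ n ∈ Finset.range M, x n| + |∑ i ∈ Finset.range (M-1),
        (((i+1:ℕ):ℝ)^k - ((i:ℕ):ℝ)^k) * ∑ j ∈ Finset.range (i+1), x j| := abs_sub _ _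
    _ ≤ (M:ℝ)^k * C + (M:ℝ)^k * C := add_le_add hb1 hb2
    _ = 2*C*(M:ℝ)^k := by ring

lemma tendsto_osc_cos (α β : ℝ) (hα : Real.sin (α/2) ≠ 0) (k j : ℕ) (hkj : k < j) :
    Tendsto (fun N : ℕ => (∑ n ∈ Finset.range N, (n:ℝ)^k * Real.cos (α*n+β)) / (N:ℝ)^j)
      atTop (nhds 0) := by
  set C : ℝ := 1/|Real.sin (α/2)| with hCdef
  have hC0 : 0 ≤ C := by positivity
  refine squeeze_zero_norm (a := fun N : ℕ => (2*C+2*C) / (N:ℝ)) ?_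
    (tendsto_const_div_atTop_nhds_zero_nat (2*C+2*C))
  · intro N
    rcases Nat.eq_zero_or_pos N with rfl|hN
    · simp [zero_pow (by omega : j ≠ 0)]
    · have hb := abel_bound (fun n : ℕ => Real.cos (α*n+β)) C (cos_psum_bound α β hα) k N
      have hN0 : (0:ℝ) < (N:ℝ) := by exact_mod_cast hN
      rw [Real.norm_eq_abs, abs_div, abs_pow, Nat.abs_cast, div_le_div_iff₀ (by positivity) hN0]
      have h1 : |∑ n ∈ Finset.range N, (n:ℝ)^k * Real.cos (α*n+β)| * (N:ℝ)
          ≤ (2*C*(N:ℝ)^k) * (N:ℝ) := mul_le_mul_of_nonneg_right hb hN0.le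
      have h2 : (N:ℝ)^(k+1) ≤ (N:ℝ)^j :=
        pow_le_pow_right₀ (by exact_mod_cast hN) (by omega)
      calc |∑ n ∈ Finset.range N, (n:ℝ)^k * Real.cos (α*n+β)| * (N:ℝ)
          ≤ (2*C*(N:ℝ)^k) * (N:ℝ) := h1
        _ = 2*C*(N:ℝ)^(k+1) := by ring
        _ ≤ 2*C*(N:ℝ)^j := by
            apply mul_le_mul_of_nonneg_left h2 (by positivity)
        _ ≤ (2*C+2*C)*(N:ℝ)^j := by nlinarith [pow_pos hN0 j]

lemma tendsto_osc_sin (α β : ℝ) (hα : Real.sin (α/2) ≠ 0) (k j : ℕ) (hkj : k < j) :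
    Tendsto (fun N : ℕ => (∑ n ∈ Finset.range N, (n:ℝ)^k * Real.sin (α*n+β)) / (N:ℝ)^j)
      atTop (nhds 0) := by
  have h := tendsto_osc_cos α (β - Real.pi/2) hα k j hkj
  refine h.congr fun N => ?_
  congr 1
  refine Finset.sum_congr rfl fun n _ => ?_
  congr 1
  rw [show α*(n:ℝ) + (β - Real.pi/2) = -(Real.pi/2 - (α*n+β)) by ring, Real.cos_neg,
    Real.cos_pi_div_two_sub]

lemma tendsto_inv_nat : Tendsto (fun N : ℕ => 1/(N:ℝ)) atTop (nhds 0) :=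
  tendsto_one_div_atTop_nhds_zero_nat

lemma tendsto_pow0 :
    Tendsto (fun N : ℕ => (∑ n ∈ Finset.range N, ((n:ℝ)^0 : ℝ))/(N:ℝ)^1) atTop (nhds 1) := by
  refine Tendsto.congr' ?_ (tendsto_const_nhds : Tendsto (fun _ : ℕ => (1:ℝ)) atTop (nhds 1))
  filter_upwards [eventually_ge_atTop 1] with N hN
  have hN0 : (N:ℝ) ≠ 0 := Nat.cast_ne_zero.mpr (by omega)
  simp [Finset.sum_const, hN0]

lemma sum_range_cast (N : ℕ) : ∑ n ∈ Finset.range N, (n:ℝ) = (N:ℝ)*((N:ℝ)-1)/2 := by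
  induction N with
  | zero => simp
  | succ n ih => rw [Finset.sum_range_succ, ih]; push_cast; ring

lemma sum_range_cast_sq (N : ℕ) :
    ∑ n ∈ Finset.range N, (n:ℝ)^2 = (N:ℝ)*((N:ℝ)-1)*(2*(N:ℝ)-1)/6 := by
  induction N with
  | zero => simp
  | succ n ih => rw [Finset.sum_range_succ, ih]; push_cast; ring

lemma tendsto_pow1 :
    Tendsto (fun N : ℕ => (∑ n ∈ Finset.range N, (n:ℝ)^1)/(N:ℝ)^2) atTop (nhds (1/2)) := by
  have base : Tendsto (fun N : ℕ => (1 - 1/(N:ℝ))/2) atTop (nhds ((1-0)/2)) :=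
    (tendsto_const_nhds.sub tendsto_inv_nat).div_const 2
  rw [show ((1:ℝ)-0)/2 = 1/2 by norm_num] at base
  refine base.congr' ?_
  filter_upwards [eventually_ge_atTop 1] with N hN
  have hN0 : (N:ℝ) ≠ 0 := Nat.cast_ne_zero.mpr (by omega)
  simp only [pow_one, sum_range_cast]
  field_simp

lemma tendsto_pow2 :
    Tendsto (fun N : ℕ => (∑ n ∈ Finset.range N, (n:ℝ)^2)/(N:ℝ)^3) atTop (nhds (1/3)) := by
  have base : Tendsto (fun N : ℕ => (1 - 1/(N:ℝ))*(2 - 1/(N:ℝ))/6) atTop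
      (nhds ((1-0)*(2-0)/6)) :=
    ((tendsto_const_nhds.sub tendsto_inv_nat).mul (tendsto_const_nhds.sub tendsto_inv_nat)).div_const 6
  rw [show ((1:ℝ)-0)*(2-0)/6 = 1/3 by norm_num] at base
  refine base.congr' ?_
  filter_upwards [eventually_ge_atTop 1] with N hN
  have hN0 : (N:ℝ) ≠ 0 := Nat.cast_ne_zero.mpr (by omega)
  rw [sum_range_cast_sq]
  field_simp

lemma tendsto_lower (f : ℕ → ℝ) (k j : ℕ) (L : ℝ) (hkj : k < j)
    (h : Tendsto (fun N : ℕ => f N/(N:ℝ)^k) atTop (nhds L)) :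
    Tendsto (fun N : ℕ => f N/(N:ℝ)^j) atTop (nhds 0) := by
  have h2 : Tendsto (fun N : ℕ => (1/(N:ℝ))^(j-k)) atTop (nhds 0) := by
    have := tendsto_inv_nat.pow (j-k)
    rwa [zero_pow (by omega : j - k ≠ 0)] at this
  have h3 := h.mul h2
  rw [mul_zero] at h3
  refine h3.congr' ?_
  filter_upwards [eventually_ge_atTop 1] with N hN
  have hN0 : (N:ℝ) ≠ 0 := Nat.cast_ne_zero.mpr (by omega)
  rw [one_div, inv_pow, ← div_eq_mul_inv, div_div, ← pow_add, Nat.add_sub_cancel' hkj.le]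

/-- Transfer a limit for `range`-sums to `Icc 1 (N-1)`-sums. -/
lemma tendsto_Icc_of_range (F : ℕ → ℝ) (j : ℕ) (hj : 0 < j) (L : ℝ)
    (h : Tendsto (fun N : ℕ => (∑ n ∈ Finset.range N, F n)/(N:ℝ)^j) atTop (nhds L)) :
    Tendsto (fun N : ℕ => (∑ n ∈ Finset.Icc 1 (N-1), F n)/(N:ℝ)^j) atTop (nhds L) := by
  have h0 : Tendsto (fun N : ℕ => F 0/(N:ℝ)^j) atTop (nhds 0) := by
    apply tendsto_lower (fun _ => F 0) 0 j (F 0) hj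
    simpa using (tendsto_const_nhds : Tendsto (fun _ : ℕ => F 0) atTop (nhds (F 0)))
  have h3 := h.sub h0
  rw [sub_zero] at h3
  refine h3.congr' ?_
  filter_upwards [eventually_ge_atTop 1] with N hN
  have hsplit : ∑ n ∈ Finset.range N, F n = F 0 + ∑ n ∈ Finset.Icc 1 (N-1), F n := by
    have e1 : Finset.Ico 1 N = Finset.Icc 1 (N-1) := by
      rw [← Finset.Ico_add_one_right_eq_Icc]
      congr 1
      omega
    rw [Finset.range_eq_Ico, Finset.sum_eq_sum_Ico_succ_bot (by omega : 0 < N) F]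
    norm_num [e1]
  rw [hsplit]
  ring

lemma tendsto_j1 (α β : ℝ) (hα : Real.sin (α/2) ≠ 0) (P0 Q0 R0 : ℝ) :
    Tendsto (fun N : ℕ => (∑ n ∈ Finset.range N,
        (P0 + Q0 * Real.cos (α*n+β) + R0 * Real.sin (α*n+β))) / (N:ℝ)^1)
      atTop (nhds P0) := by
  have c0 := tendsto_pow0
  have cc := tendsto_osc_cos α β hα 0 1 (by omega)
  have cs := tendsto_osc_sin α β hα 0 1 (by omega)
  have comb := ((c0.const_mul P0).add (cc.const_mul Q0)).add (cs.const_mul R0)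
  rw [show P0*1 + Q0*0 + R0*0 = P0 by ring] at comb
  refine comb.congr fun N => ?_
  rw [← mul_div_assoc, ← mul_div_assoc, ← mul_div_assoc, ← add_div, ← add_div]
  congr 1
  simp only [Finset.mul_sum, ← Finset.sum_add_distrib]
  exact Finset.sum_congr rfl fun n _ => by ring

lemma tendsto_j2 (α β : ℝ) (hα : Real.sin (α/2) ≠ 0) (P0 P1 Q0 Q1 R0 R1 : ℝ) :
    Tendsto (fun N : ℕ => (∑ n ∈ Finset.range N,
        (P0 + P1*(n:ℝ) + (Q0 + Q1*(n:ℝ)) * Real.cos (α*n+β)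
          + (R0 + R1*(n:ℝ)) * Real.sin (α*n+β))) / (N:ℝ)^2)
      atTop (nhds (P1/2)) := by
  have c0 := tendsto_lower _ 1 2 1 (by omega) tendsto_pow0
  have c1 := tendsto_pow1
  have cc0 := tendsto_osc_cos α β hα 0 2 (by omega)
  have cc1 := tendsto_osc_cos α β hα 1 2 (by omega)
  have cs0 := tendsto_osc_sin α β hα 0 2 (by omega)
  have cs1 := tendsto_osc_sin α β hα 1 2 (by omega)
  have comb := (((((c0.const_mul P0).add (c1.const_mul P1)).add (cc0.const_mul Q0)).add
    (cc1.const_mul Q1)).add (cs0.const_mul R0)).add (cs1.const_mul R1)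
  rw [show P0*0 + P1*(1/2) + Q0*0 + Q1*0 + R0*0 + R1*0 = P1/2 by ring] at comb
  refine comb.congr fun N => ?_
  simp only [← mul_div_assoc, ← add_div]
  congr 1
  simp only [Finset.mul_sum, ← Finset.sum_add_distrib]
  exact Finset.sum_congr rfl fun n _ => by ring

lemma tendsto_j3 (α β : ℝ) (hα : Real.sin (α/2) ≠ 0) (P0 P1 P2 Q0 Q1 Q2 R0 R1 R2 : ℝ) :
    Tendsto (fun N : ℕ => (∑ n ∈ Finset.range N,
        (P0 + P1*(n:ℝ) + P2*(n:ℝ)^2 + (Q0 + Q1*(n:ℝ) + Q2*(n:ℝ)^2) * Real.cos (α*n+β)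
          + (R0 + R1*(n:ℝ) + R2*(n:ℝ)^2) * Real.sin (α*n+β))) / (N:ℝ)^3)
      atTop (nhds (P2/3)) := by
  have c0 := tendsto_lower _ 1 3 1 (by omega) tendsto_pow0
  have c1 := tendsto_lower _ 2 3 (1/2) (by omega) tendsto_pow1
  have c2 := tendsto_pow2
  have cc0 := tendsto_osc_cos α β hα 0 3 (by omega)
  have cc1 := tendsto_osc_cos α β hα 1 3 (by omega)
  have cc2 := tendsto_osc_cos α β hα 2 3 (by omega)
  have cs0 := tendsto_osc_sin α β hα 0 3 (by omega)
  have cs1 := tendsto_osc_sin α β hα 1 3 (by omega)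
  have cs2 := tendsto_osc_sin α β hα 2 3 (by omega)
  have comb := ((((((((c0.const_mul P0).add (c1.const_mul P1)).add (c2.const_mul P2)).add
    (cc0.const_mul Q0)).add (cc1.const_mul Q1)).add (cc2.const_mul Q2)).add
    (cs0.const_mul R0)).add (cs1.const_mul R1)).add (cs2.const_mul R2)
  rw [show P0*0 + P1*0 + P2*(1/3) + Q0*0 + Q1*0 + Q2*0 + R0*0 + R1*0 + R2*0 = P2/3 by ring]
    at comb
  refine comb.congr fun N => ?_
  simp only [← mul_div_assoc, ← add_div]
  congr 1
  simp only [Finset.mul_sum, ← Finset.sum_add_distrib]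
  exact Finset.sum_congr rfl fun n _ => by ring

lemma ent00 (a T ψ φ : ℝ) (n : ℕ) :
    (Real.sin (ψ*((n:ℝ)+1)+φ) - Real.sin (ψ*(n:ℝ)+φ)) * (Real.sin (ψ*((n:ℝ)+1)+φ) - Real.sin (ψ*(n:ℝ)+φ))
    = (1 - Real.cos ψ) + (Real.cos ψ*(1 - Real.cos ψ)) * Real.cos (2*ψ*(n:ℝ)+2*φ) + (-(Real.sin ψ*(1 - Real.cos ψ))) * Real.sin (2*ψ*(n:ℝ)+2*φ) := by
  have h1 := Real.sin_sq_add_cos_sq (ψ*(n:ℝ)+φ)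
  have h2 := Real.sin_sq_add_cos_sq ψ
  rw [show ψ*((n:ℝ)+1)+φ = (ψ*(n:ℝ)+φ) + ψ by ring,
      show 2*ψ*(n:ℝ)+2*φ = (ψ*(n:ℝ)+φ) + (ψ*(n:ℝ)+φ) by ring]
  generalize ψ*(n:ℝ)+φ = u at h1 ⊢
  simp only [Real.sin_add, Real.cos_add]
  linear_combination ((1:ℝ) - Real.cos ψ) * h1 + (Real.cos u^2) * h2

lemma ent02 (a T ψ φ : ℝ) (n : ℕ) :
    (Real.sin (ψ*((n:ℝ)+1)+φ) - Real.sin (ψ*(n:ℝ)+φ)) * (a*(Real.cos (ψ*((n:ℝ)+1)+φ) - Real.cos (ψ*(n:ℝ)+φ)))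
    = (0:ℝ) + (-(a*Real.sin ψ*(1 - Real.cos ψ))) * Real.cos (2*ψ*(n:ℝ)+2*φ) + (-(a*Real.cos ψ*(1 - Real.cos ψ))) * Real.sin (2*ψ*(n:ℝ)+2*φ) := by
  have h1 := Real.sin_sq_add_cos_sq (ψ*(n:ℝ)+φ)
  have h2 := Real.sin_sq_add_cos_sq ψ
  rw [show ψ*((n:ℝ)+1)+φ = (ψ*(n:ℝ)+φ) + ψ by ring,
      show 2*ψ*(n:ℝ)+2*φ = (ψ*(n:ℝ)+φ) + (ψ*(n:ℝ)+φ) by ring]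
  generalize ψ*(n:ℝ)+φ = u at h1 ⊢
  simp only [Real.sin_add, Real.cos_add]
  linear_combination (0:ℝ) * h1 + (-(Real.cos u*Real.sin u*a)) * h2

lemma ent22 (a T ψ φ : ℝ) (n : ℕ) :
    (a*(Real.cos (ψ*((n:ℝ)+1)+φ) - Real.cos (ψ*(n:ℝ)+φ))) * (a*(Real.cos (ψ*((n:ℝ)+1)+φ) - Real.cos (ψ*(n:ℝ)+φ)))
    = (a^2*(1 - Real.cos ψ)) + (-(a^2*Real.cos ψ*(1 - Real.cos ψ))) * Real.cos (2*ψ*(n:ℝ)+2*φ) + (a^2*Real.sin ψ*(1 - Real.cos ψ)) * Real.sin (2*ψ*(n:ℝ)+2*φ) := by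
  have h1 := Real.sin_sq_add_cos_sq (ψ*(n:ℝ)+φ)
  have h2 := Real.sin_sq_add_cos_sq ψ
  rw [show ψ*((n:ℝ)+1)+φ = (ψ*(n:ℝ)+φ) + ψ by ring,
      show 2*ψ*(n:ℝ)+2*φ = (ψ*(n:ℝ)+φ) + (ψ*(n:ℝ)+φ) by ring]
  generalize ψ*(n:ℝ)+φ = u at h1 ⊢
  simp only [Real.sin_add, Real.cos_add]
  linear_combination (Real.sin ψ^2*a^2 - Real.cos ψ*a^2 + Real.cos ψ^2*a^2) * h1 + (a^2 - Real.cos u^2*a^2) * h2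

lemma ent01 (a T ψ φ : ℝ) (n : ℕ) :
    (Real.sin (ψ*((n:ℝ)+1)+φ) - Real.sin (ψ*(n:ℝ)+φ)) * (a*T*(((n:ℝ)+1) * Real.cos (ψ*((n:ℝ)+1)+φ) - (n:ℝ) * Real.cos (ψ*(n:ℝ)+φ)))
    = (a*T*Real.sin ψ/2) + (0:ℝ)*(n:ℝ) + ((a*T*Real.sin ψ*(2*Real.cos ψ-1)/2) + (-(a*T*Real.sin ψ*(1 - Real.cos ψ)))*(n:ℝ)) * Real.cos (2*ψ*(n:ℝ)+2*φ) + ((-(a*T*(1 - Real.cos ψ)*(2*Real.cos ψ+1)/2)) + (-(a*T*Real.cos ψ*(1 - Real.cos ψ)))*(n:ℝ)) * Real.sin (2*ψ*(n:ℝ)+2*φ) := by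
  have h1 := Real.sin_sq_add_cos_sq (ψ*(n:ℝ)+φ)
  have h2 := Real.sin_sq_add_cos_sq ψ
  rw [show ψ*((n:ℝ)+1)+φ = (ψ*(n:ℝ)+φ) + ψ by ring,
      show 2*ψ*(n:ℝ)+2*φ = (ψ*(n:ℝ)+φ) + (ψ*(n:ℝ)+φ) by ring]
  generalize ψ*(n:ℝ)+φ = u at h1 ⊢
  simp only [Real.sin_add, Real.cos_add]
  linear_combination ((1/2:ℝ)*Real.sin ψ*a*T) * h1 + (-(Real.cos u*Real.sin u*a*T) - Real.cos u*Real.sin u*a*T*(n:ℝ)) * h2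

lemma ent12 (a T ψ φ : ℝ) (n : ℕ) :
    (a*T*(((n:ℝ)+1) * Real.cos (ψ*((n:ℝ)+1)+φ) - (n:ℝ) * Real.cos (ψ*(n:ℝ)+φ))) * (a*(Real.cos (ψ*((n:ℝ)+1)+φ) - Real.cos (ψ*(n:ℝ)+φ)))
    = (a^2*T*(1 - Real.cos ψ)/2) + (a^2*T*(1 - Real.cos ψ))*(n:ℝ) + ((-(a^2*T*(1 - Real.cos ψ)*(2*Real.cos ψ+1)/2)) + (-(a^2*T*Real.cos ψ*(1 - Real.cos ψ)))*(n:ℝ)) * Real.cos (2*ψ*(n:ℝ)+2*φ) + ((a^2*T*Real.sin ψ*(1-2*Real.cos ψ)/2) + (a^2*T*Real.sin ψ*(1 - Real.cos ψ))*(n:ℝ)) * Real.sin (2*ψ*(n:ℝ)+2*φ) := by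
  have h1 := Real.sin_sq_add_cos_sq (ψ*(n:ℝ)+φ)
  have h2 := Real.sin_sq_add_cos_sq ψ
  rw [show ψ*((n:ℝ)+1)+φ = (ψ*(n:ℝ)+φ) + ψ by ring,
      show 2*ψ*(n:ℝ)+2*φ = (ψ*(n:ℝ)+φ) + (ψ*(n:ℝ)+φ) by ring]
  generalize ψ*(n:ℝ)+φ = u at h1 ⊢
  simp only [Real.sin_add, Real.cos_add]
  linear_combination ((-1/2:ℝ)*a^2*T + Real.sin ψ^2*a^2*T + Real.sin ψ^2*a^2*T*(n:ℝ) + (-1/2:ℝ)*Real.cos ψ*a^2*T - Real.cos ψ*a^2*T*(n:ℝ) + Real.cos ψ^2*a^2*T + Real.cos ψ^2*a^2*T*(n:ℝ)) * h1 + (a^2*T + a^2*T*(n:ℝ) - Real.cos u^2*a^2*T - Real.cos u^2*a^2*T*(n:ℝ)) * h2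

lemma ent11 (a T ψ φ : ℝ) (n : ℕ) :
    (a*T*(((n:ℝ)+1) * Real.cos (ψ*((n:ℝ)+1)+φ) - (n:ℝ) * Real.cos (ψ*(n:ℝ)+φ))) * (a*T*(((n:ℝ)+1) * Real.cos (ψ*((n:ℝ)+1)+φ) - (n:ℝ) * Real.cos (ψ*(n:ℝ)+φ)))
    = (a^2*T^2/2) + (a^2*T^2*(1 - Real.cos ψ))*(n:ℝ) + (a^2*T^2*(1 - Real.cos ψ))*(n:ℝ)^2 + ((a^2*T^2*(2*Real.cos ψ^2-1)/2) + (-(a^2*T^2*(1 - Real.cos ψ)*(2*Real.cos ψ+1)))*(n:ℝ) + (-(a^2*T^2*Real.cos ψ*(1 - Real.cos ψ)))*(n:ℝ)^2) * Real.cos (2*ψ*(n:ℝ)+2*φ) + ((-(a^2*T^2*Real.cos ψ*Real.sin ψ)) + (a^2*T^2*Real.sin ψ*(1-2*Real.cos ψ))*(n:ℝ) + (a^2*T^2*Real.sin ψ*(1 - Real.cos ψ))*(n:ℝ)^2) * Real.sin (2*ψ*(n:ℝ)+2*φ) := by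
  have h1 := Real.sin_sq_add_cos_sq (ψ*(n:ℝ)+φ)
  have h2 := Real.sin_sq_add_cos_sq ψ
  rw [show ψ*((n:ℝ)+1)+φ = (ψ*(n:ℝ)+φ) + ψ by ring,
      show 2*ψ*(n:ℝ)+2*φ = (ψ*(n:ℝ)+φ) + (ψ*(n:ℝ)+φ) by ring]
  generalize ψ*(n:ℝ)+φ = u at h1 ⊢
  simp only [Real.sin_add, Real.cos_add]
  linear_combination ((-1/2:ℝ)*a^2*T^2 - a^2*T^2*(n:ℝ) + Real.sin ψ^2*a^2*T^2 + 2*Real.sin ψ^2*a^2*T^2*(n:ℝ) + Real.sin ψ^2*a^2*T^2*(n:ℝ)^2 - Real.cos ψ*a^2*T^2*(n:ℝ) - Real.cos ψ*a^2*T^2*(n:ℝ)^2 + Real.cos ψ^2*a^2*T^2 + 2*Real.cos ψ^2*a^2*T^2*(n:ℝ) + Real.cos ψ^2*a^2*T^2*(n:ℝ)^2) * h1 + (a^2*T^2 + 2*a^2*T^2*(n:ℝ) + a^2*T^2*(n:ℝ)^2 - Real.cos u^2*a^2*T^2 - 2*Real.cos u^2*a^2*T^2*(n:ℝ) - Real.cos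 u^2*a^2*T^2*(n:ℝ)^2) * h2

lemma tendsto_R00 (a T ω φ : ℝ) (hs : Real.sin (ω*T) ≠ 0) :
    Tendsto (fun N : ℕ => Rmat a T ω φ N 0 0 / (N:ℝ)^1) atTop
      (nhds (1 - Real.cos (ω*T))) := by
  have hα : Real.sin ((2*(ω*T))/2) ≠ 0 := by
    rw [show (2*(ω*T))/2 = ω*T by ring]; exact hs
  have base := tendsto_Icc_of_range _ 1 (by omega) _
    (tendsto_j1 (2*(ω*T)) (2*φ) hα (1 - Real.cos (ω*T)) (Real.cos (ω*T)*(1 - Real.cos (ω*T))) (-(Real.sin (ω*T)*(1 - Real.cos (ω*T)))))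
  refine base.congr fun N => ?_
  simp only [Rmat, Matrix.of_apply, zSeq, Matrix.cons_val_zero, Matrix.cons_val_one,
    Matrix.head_cons, Matrix.cons_val_two, Matrix.tail_cons]
  congr 1
  exact Finset.sum_congr rfl fun n _ => (ent00 a T (ω*T) φ n).symm

lemma tendsto_R02 (a T ω φ : ℝ) (hs : Real.sin (ω*T) ≠ 0) :
    Tendsto (fun N : ℕ => Rmat a T ω φ N 0 2 / (N:ℝ)^1) atTop
      (nhds (0:ℝ)) := by
  have hα : Real.sin ((2*(ω*T))/2) ≠ 0 := by
    rw [show (2*(ω*T))/2 = ω*T by ring]; exact hs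
  have base := tendsto_Icc_of_range _ 1 (by omega) _
    (tendsto_j1 (2*(ω*T)) (2*φ) hα (0:ℝ) (-(a*Real.sin (ω*T)*(1 - Real.cos (ω*T)))) (-(a*Real.cos (ω*T)*(1 - Real.cos (ω*T)))))
  refine base.congr fun N => ?_
  simp only [Rmat, Matrix.of_apply, zSeq, Matrix.cons_val_zero, Matrix.cons_val_one,
    Matrix.head_cons, Matrix.cons_val_two, Matrix.tail_cons]
  congr 1
  exact Finset.sum_congr rfl fun n _ => (ent02 a T (ω*T) φ n).symm

lemma tendsto_R22 (a T ω φ : ℝ) (hs : Real.sin (ω*T) ≠ 0) :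
    Tendsto (fun N : ℕ => Rmat a T ω φ N 2 2 / (N:ℝ)^1) atTop
      (nhds (a^2*(1 - Real.cos (ω*T)))) := by
  have hα : Real.sin ((2*(ω*T))/2) ≠ 0 := by
    rw [show (2*(ω*T))/2 = ω*T by ring]; exact hs
  have base := tendsto_Icc_of_range _ 1 (by omega) _
    (tendsto_j1 (2*(ω*T)) (2*φ) hα (a^2*(1 - Real.cos (ω*T))) (-(a^2*Real.cos (ω*T)*(1 - Real.cos (ω*T)))) (a^2*Real.sin (ω*T)*(1 - Real.cos (ω*T))))
  refine base.congr fun N => ?_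
  simp only [Rmat, Matrix.of_apply, zSeq, Matrix.cons_val_zero, Matrix.cons_val_one,
    Matrix.head_cons, Matrix.cons_val_two, Matrix.tail_cons]
  congr 1
  exact Finset.sum_congr rfl fun n _ => (ent22 a T (ω*T) φ n).symm

lemma tendsto_R01 (a T ω φ : ℝ) (hs : Real.sin (ω*T) ≠ 0) :
    Tendsto (fun N : ℕ => Rmat a T ω φ N 0 1 / (N:ℝ)^2) atTop
      (nhds (0:ℝ)) := by
  have hα : Real.sin ((2*(ω*T))/2) ≠ 0 := by
    rw [show (2*(ω*T))/2 = ω*T by ring]; exact hs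
  have base := tendsto_Icc_of_range _ 2 (by omega) _
    (tendsto_j2 (2*(ω*T)) (2*φ) hα (a*T*Real.sin (ω*T)/2) (0:ℝ) (a*T*Real.sin (ω*T)*(2*Real.cos (ω*T)-1)/2) (-(a*T*Real.sin (ω*T)*(1 - Real.cos (ω*T)))) (-(a*T*(1 - Real.cos (ω*T))*(2*Real.cos (ω*T)+1)/2)) (-(a*T*Real.cos (ω*T)*(1 - Real.cos (ω*T)))))
  rw [show (0:ℝ)/2 = (0:ℝ) by norm_num] at base
  refine base.congr fun N => ?_
  simp only [Rmat, Matrix.of_apply, zSeq, Matrix.cons_val_zero, Matrix.cons_val_one,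
    Matrix.head_cons, Matrix.cons_val_two, Matrix.tail_cons]
  congr 1
  exact Finset.sum_congr rfl fun n _ => (ent01 a T (ω*T) φ n).symm

lemma tendsto_R12 (a T ω φ : ℝ) (hs : Real.sin (ω*T) ≠ 0) :
    Tendsto (fun N : ℕ => Rmat a T ω φ N 1 2 / (N:ℝ)^2) atTop
      (nhds (a^2*T*(1 - Real.cos (ω*T))/2)) := by
  have hα : Real.sin ((2*(ω*T))/2) ≠ 0 := by
    rw [show (2*(ω*T))/2 = ω*T by ring]; exact hs
  have base := tendsto_Icc_of_range _ 2 (by omega) _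
    (tendsto_j2 (2*(ω*T)) (2*φ) hα (a^2*T*(1 - Real.cos (ω*T))/2) (a^2*T*(1 - Real.cos (ω*T))) (-(a^2*T*(1 - Real.cos (ω*T))*(2*Real.cos (ω*T)+1)/2)) (-(a^2*T*Real.cos (ω*T)*(1 - Real.cos (ω*T)))) (a^2*T*Real.sin (ω*T)*(1-2*Real.cos (ω*T))/2) (a^2*T*Real.sin (ω*T)*(1 - Real.cos (ω*T))))
  refine base.congr fun N => ?_
  simp only [Rmat, Matrix.of_apply, zSeq, Matrix.cons_val_zero, Matrix.cons_val_one,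
    Matrix.head_cons, Matrix.cons_val_two, Matrix.tail_cons]
  congr 1
  exact Finset.sum_congr rfl fun n _ => (ent12 a T (ω*T) φ n).symm

lemma tendsto_R11 (a T ω φ : ℝ) (hs : Real.sin (ω*T) ≠ 0) :
    Tendsto (fun N : ℕ => Rmat a T ω φ N 1 1 / (N:ℝ)^3) atTop
      (nhds (a^2*T^2*(1 - Real.cos (ω*T))/3)) := by
  have hα : Real.sin ((2*(ω*T))/2) ≠ 0 := by
    rw [show (2*(ω*T))/2 = ω*T by ring]; exact hs
  have base := tendsto_Icc_of_range _ 3 (by omega) _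
    (tendsto_j3 (2*(ω*T)) (2*φ) hα (a^2*T^2/2) (a^2*T^2*(1 - Real.cos (ω*T))) (a^2*T^2*(1 - Real.cos (ω*T))) (a^2*T^2*(2*Real.cos (ω*T)^2-1)/2) (-(a^2*T^2*(1 - Real.cos (ω*T))*(2*Real.cos (ω*T)+1))) (-(a^2*T^2*Real.cos (ω*T)*(1 - Real.cos (ω*T)))) (-(a^2*T^2*Real.cos (ω*T)*Real.sin (ω*T))) (a^2*T^2*Real.sin (ω*T)*(1-2*Real.cos (ω*T))) (a^2*T^2*Real.sin (ω*T)*(1 - Real.cos (ω*T))))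
  refine base.congr fun N => ?_
  simp only [Rmat, Matrix.of_apply, zSeq, Matrix.cons_val_zero, Matrix.cons_val_one,
    Matrix.head_cons, Matrix.cons_val_two, Matrix.tail_cons]
  congr 1
  exact Finset.sum_congr rfl fun n _ => (ent11 a T (ω*T) φ n).symm
end DetRmatAux

open DetRmatAux in
theorem det_Rmat_asymptotics
    (a₁ T ω₁ φ₁ : ℝ) (ha : a₁ ≠ 0) (hT : 0 < T) (hs : Real.sin (ω₁ * T) ≠ 0) :
    Tendsto (fun N : ℕ => (Rmat a₁ T ω₁ φ₁ N).det / (N : ℝ) ^ 5)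
      atTop (nhds (a₁ ^ 4 * T ^ 2 * (1 - Real.cos (ω₁ * T)) ^ 3 / 12)) := by
  have hsymm : ∀ (N : ℕ) (i j : Fin 3), Rmat a₁ T ω₁ φ₁ N i j = Rmat a₁ T ω₁ φ₁ N j i := by
    intro N i j
    simp only [Rmat, Matrix.of_apply]
    exact Finset.sum_congr rfl fun n _ => mul_comm _ _
  have h00 := tendsto_R00 a₁ T ω₁ φ₁ hs
  have h01 := tendsto_R01 a₁ T ω₁ φ₁ hs
  have h02 := tendsto_R02 a₁ T ω₁ φ₁ hs
  have h11 := tendsto_R11 a₁ T ω₁ φ₁ hs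
  have h12 := tendsto_R12 a₁ T ω₁ φ₁ hs
  have h22 := tendsto_R22 a₁ T ω₁ φ₁ hs
  have h10 : Tendsto (fun N : ℕ => Rmat a₁ T ω₁ φ₁ N 1 0 / (N:ℝ)^2) atTop (nhds (0:ℝ)) :=
    h01.congr fun N => by rw [hsymm N 0 1]
  have h20 : Tendsto (fun N : ℕ => Rmat a₁ T ω₁ φ₁ N 2 0 / (N:ℝ)^1) atTop (nhds (0:ℝ)) :=
    h02.congr fun N => by rw [hsymm N 0 2]
  have h21 : Tendsto (fun N : ℕ => Rmat a₁ T ω₁ φ₁ N 2 1 / (N:ℝ)^2) atTop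
      (nhds (a₁^2*T*(1 - Real.cos (ω₁*T))/2)) :=
    h12.congr fun N => by rw [hsymm N 1 2]
  have comb := ((h00.mul ((h11.mul h22).sub (h12.mul h21))).sub
    (h01.mul ((h10.mul h22).sub (h12.mul h20)))).add
    (h02.mul ((h10.mul h21).sub (h11.mul h20)))
  rw [show (1 - Real.cos (ω₁*T))*((a₁^2*T^2*(1 - Real.cos (ω₁*T))/3)*(a₁^2*(1 - Real.cos (ω₁*T)))
      - (a₁^2*T*(1 - Real.cos (ω₁*T))/2)*(a₁^2*T*(1 - Real.cos (ω₁*T))/2))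
      - (0:ℝ)*((0:ℝ)*(a₁^2*(1 - Real.cos (ω₁*T))) - (a₁^2*T*(1 - Real.cos (ω₁*T))/2)*(0:ℝ))
      + (0:ℝ)*((0:ℝ)*(a₁^2*T*(1 - Real.cos (ω₁*T))/2) - (a₁^2*T^2*(1 - Real.cos (ω₁*T))/3)*(0:ℝ))
      = a₁ ^ 4 * T ^ 2 * (1 - Real.cos (ω₁ * T)) ^ 3 / 12 by ring] at comb
  refine comb.congr' ?_
  filter_upwards [eventually_ge_atTop 1] with N hN
  have hN0 : (N:ℝ) ≠ 0 := Nat.cast_ne_zero.mpr (by omega)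
  rw [Matrix.det_fin_three]
  field_simp
  ring
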